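/- arXiv:2402.08041 — 3 statements merged into one kernel-verified Lean document; each statement's English description precedes it below -/
import Mathlib

section
/- For square matrices A converging to zero, the symmetric positive-definite square root satisfies the quadratic estimate |(I + A)^{1/2} - I - (1/2)sym(A)| ≤ C|A|², where sym(A) = (A + Aᵀ)/2, for all A with |A| sufficiently small. -/
open Matrix

attribute [local instance] Matrix.frobeniusNormedAddCommGroup Matrix.frobeniusNormedSpace

section aux

variable {d : ℕ}

lemma frob_norm_sq_eq (M : Matrix (Fin d) (Fin d) ℝ) :
    ‖M‖ ^ 2 = ∑ i, ∑ j, (M i j) ^ 2 := by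
  have h0 : (0:ℝ) ≤ ∑ i, ∑ j, ‖M i j‖ ^ (2:ℝ) := by positivity
  rw [Matrix.frobenius_norm_def, ← Real.rpow_natCast _ 2, ← Real.rpow_mul h0]
  norm_num

lemma trace_transpose_mul_self (M : Matrix (Fin d) (Fin d) ℝ) :
    (Mᵀ * M).trace = ∑ i, ∑ j, (M i j) ^ 2 := by
  simp only [Matrix.trace, Matrix.diag, Matrix.mul_apply, Matrix.transpose_apply]
  rw [Finset.sum_comm]
  exact Finset.sum_congr rfl fun i _ => Finset.sum_congr rfl fun j _ => by ring

lemma trace_nonneg_of_posSemidef {M : Matrix (Fin d) (Fin d) ℝ} (hM : M.PosSemidef) :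
    0 ≤ M.trace := by
  refine Finset.sum_nonneg fun i _ => ?_
  exact hM.diag_nonneg

end aux

/-- For square matrices `A` converging to zero, the symmetric positive-definite square root
of `I + A` satisfies `|(I + A)^{1/2} - I - (1/2) sym A| ≤ C |A|²` (Frobenius norm),
for all `A` with `|A|` sufficiently small.  Here `sym A = (A + Aᵀ)/2`, so
`(1/2) sym A = (1/4) (A + Aᵀ)`. -/
theorem sqrt_quadratic_estimate (d : ℕ) :
    ∃ C > (0 : ℝ), ∃ δ > (0 : ℝ), ∀ A S : Matrix (Fin d) (Fin d) ℝ,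
      A.IsSymm → ‖A‖ < δ → S.IsSymm → S.PosDef → S * S = 1 + A →
      ‖S - 1 - (1 / 4 : ℝ) • (A + Aᵀ)‖ ≤ C * ‖A‖ ^ 2 := by
  refine ⟨1, one_pos, 1, one_pos, fun A S hAsymm _ hSsymm hSpd hSS => ?_⟩
  set E : Matrix (Fin d) (Fin d) ℝ := S - 1 with hE
  have hAt : Aᵀ = A := hAsymm
  have hEt : Eᵀ = E := by
    rw [hE, Matrix.transpose_sub, Matrix.transpose_one, hSsymm]
  -- A = E * S + E
  have hfact : E * S + E = A := by
    have h1 : (S - 1) * (S + 1) = S * S - 1 := by noncomm_ring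
    have h2 : (S - 1) * (S + 1) = E * S + E := by rw [hE]; noncomm_ring
    rw [← h2, h1, hSS]; abel
  -- A = E * E + E + E
  have hA : A = E * E + E + E := by
    have h1 : (E + 1) * (E + 1) = E * E + E + E + 1 := by noncomm_ring
    have h2 : E + 1 = S := by rw [hE]; abel
    have h3 : E * E + E + E + 1 = A + 1 := by rw [← h1, h2, hSS]; abel
    exact (add_right_cancel h3).symm
  -- trace (E*E) ≤ trace (E*A)
  have hconj : (E * S * E).PosSemidef := by
    have h := hSpd.posSemidef.mul_mul_conjTranspose_same E
    have hc : Eᴴ = E := by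
      rw [Matrix.conjTranspose_eq_transpose_of_trivial]
      exact hEt
    rwa [hc] at h
  have htr1 : (E * E).trace ≤ (E * A).trace := by
    have h1 : E * A = E * E * S + E * E := by
      rw [← hfact, Matrix.mul_add, ← Matrix.mul_assoc]
    have h2 : (E * E * S).trace = (E * S * E).trace := by
      rw [Matrix.trace_mul_cycle E S E]
    have h3 : 0 ≤ (E * E * S).trace := by
      rw [h2]; exact trace_nonneg_of_posSemidef hconj
    rw [h1, Matrix.trace_add]
    linarith
  -- ‖E‖^2 = trace (E*E)
  have hnormE : ‖E‖ ^ 2 = (E * E).trace := by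
    rw [frob_norm_sq_eq, ← trace_transpose_mul_self, hEt]
  -- Cauchy–Schwarz : trace (E*A) ≤ ‖E‖ * ‖A‖
  have hCS : (E * A).trace ≤ ‖E‖ * ‖A‖ := by
    have htr : (E * A).trace = ∑ p : Fin d × Fin d, E p.1 p.2 * A p.1 p.2 := by
      rw [Fintype.sum_prod_type]
      simp only [Matrix.trace, Matrix.diag, Matrix.mul_apply]
      refine Finset.sum_congr rfl fun i _ => Finset.sum_congr rfl fun j _ => ?_
      rw [hAsymm.apply i j]
    have hE2 : ‖E‖ ^ 2 = ∑ p : Fin d × Fin d, (E p.1 p.2) ^ 2 := by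
      rw [frob_norm_sq_eq]
      exact (Fintype.sum_prod_type (fun p : Fin d × Fin d => E p.1 p.2 ^ 2)).symm
    have hA2 : ‖A‖ ^ 2 = ∑ p : Fin d × Fin d, (A p.1 p.2) ^ 2 := by
      rw [frob_norm_sq_eq]
      exact (Fintype.sum_prod_type (fun p : Fin d × Fin d => A p.1 p.2 ^ 2)).symm
    have hsq : ((E * A).trace) ^ 2 ≤ (‖E‖ * ‖A‖) ^ 2 := by
      rw [htr, mul_pow, hE2, hA2]
      exact Finset.sum_mul_sq_le_sq_mul_sq _ _ _
    have hN : 0 ≤ ‖E‖ * ‖A‖ := mul_nonneg (norm_nonneg _) (norm_nonneg _)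
    nlinarith [hsq, hN]
  -- ‖E‖ ≤ ‖A‖
  have hEA : ‖E‖ ≤ ‖A‖ := by
    have h : ‖E‖ ^ 2 ≤ ‖E‖ * ‖A‖ := by rw [hnormE]; exact le_trans htr1 hCS
    rcases eq_or_lt_of_le (norm_nonneg E) with h0 | h0
    · rw [← h0]; exact norm_nonneg _
    · nlinarith
  -- final identity
  have hid : S - 1 - (1 / 4 : ℝ) • (A + Aᵀ) = -((1/2 : ℝ) • (E * E)) := by
    rw [hAt, ← hE]
    rw [hA]
    module
  rw [hid, norm_neg, norm_smul, Real.norm_eq_abs]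
  have hEE : ‖E * E‖ ≤ ‖E‖ * ‖E‖ := Matrix.frobenius_norm_mul E E
  have h2 : ‖E‖ * ‖E‖ ≤ ‖A‖ * ‖A‖ := mul_le_mul hEA hEA (norm_nonneg _) (norm_nonneg _)
  have h12 : |(1 / 2 : ℝ)| = 1 / 2 := by norm_num
  rw [h12]
  nlinarith [hEE, h2, norm_nonneg (E * E), sq_nonneg ‖A‖]
end

section
/- For an orientation-preserving invertible matrix A ∈ GL⁺(d,ℝ), the distance from A to SO(d) in Frobenius norm is achieved at the orthogonal polar factor: dist(A, SO(d)) = |A - A(AᵀA)^{-1/2}|. -/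
open Matrix

attribute [local instance] Matrix.frobeniusNormedAddCommGroup Matrix.frobeniusNormedSpace

/-- The special orthogonal group `SO(d)` as a subset of the `d × d` real matrices. -/
def SOd (d : ℕ) : Set (Matrix (Fin d) (Fin d) ℝ) :=
  {Q | Qᵀ * Q = 1 ∧ Q.det = 1}

/-- The Frobenius norm squared is the trace of `MᵀM`. -/
theorem aux_norm_sq_eq_trace (d : ℕ) (M : Matrix (Fin d) (Fin d) ℝ) :
    ‖M‖ ^ 2 = (Mᵀ * M).trace := by
  rw [frobenius_norm_def, ← Real.rpow_natCast _ 2, ← Real.rpow_mul (by positivity)]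
  norm_num
  simp [Matrix.trace, Matrix.mul_apply, Matrix.diag, sq]
  rw [Finset.sum_comm]

/-- Key trace inequality: for `S` positive definite and `U` orthogonal,
`tr(SU) ≤ tr(S)`. -/
theorem aux_trace_mul_le_trace (d : ℕ) (S U : Matrix (Fin d) (Fin d) ℝ)
    (hS : S.PosDef) (hU : Uᵀ * U = 1) : (S * U).trace ≤ S.trace := by
  have hH := hS.1
  set P : Matrix (Fin d) (Fin d) ℝ := (hH.eigenvectorUnitary : Matrix (Fin d) (Fin d) ℝ) with hP
  have hPU : Pᵀ * P = 1 := by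
    have := (Matrix.mem_unitaryGroup_iff'.mp hH.eigenvectorUnitary.2)
    simpa [star_eq_conjTranspose, conjTranspose_eq_transpose_of_trivial] using this
  have hUP : P * Pᵀ = 1 := by
    have := (Matrix.mem_unitaryGroup_iff.mp hH.eigenvectorUnitary.2)
    simpa [star_eq_conjTranspose, conjTranspose_eq_transpose_of_trivial] using this
  have hspec : S = P * diagonal hH.eigenvalues * Pᵀ := by
    have := hH.spectral_theorem
    simpa [star_eq_conjTranspose, conjTranspose_eq_transpose_of_trivial,
      Function.comp] using this
  set V : Matrix (Fin d) (Fin d) ℝ := Pᵀ * U * P with hV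
  have hVU : Vᵀ * V = 1 := by
    have h1 : Vᵀ * V = Pᵀ * (Uᵀ * ((P * Pᵀ) * (U * P))) := by
      simp [hV, Matrix.mul_assoc]
    rw [h1, hUP, one_mul, ← Matrix.mul_assoc Uᵀ U P, hU, one_mul, hPU]
  have hdiag : ∀ i, V i i ≤ 1 := by
    intro i
    have h2 : (Vᵀ * V) i i = 1 := by rw [hVU]; simp
    have h3 : ∑ k, V k i ^ 2 = 1 := by
      rw [← h2]; simp [Matrix.mul_apply, sq]
    have h4 : V i i ^ 2 ≤ 1 := by
      rw [← h3]
      exact Finset.single_le_sum (fun k _ => sq_nonneg (V k i)) (Finset.mem_univ i)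
    nlinarith [sq_nonneg (V i i - 1)]
  have ht1 : (S * U).trace = (diagonal hH.eigenvalues * V).trace := by
    conv_lhs => rw [hspec]
    rw [show P * diagonal hH.eigenvalues * Pᵀ * U = P * (diagonal hH.eigenvalues * (Pᵀ * U)) by
      simp [Matrix.mul_assoc]]
    rw [Matrix.trace_mul_comm]
    simp [hV, Matrix.mul_assoc]
  have ht2 : S.trace = (diagonal hH.eigenvalues).trace := by
    conv_lhs => rw [hspec]
    rw [Matrix.trace_mul_comm, ← Matrix.mul_assoc, hPU, one_mul]
  rw [ht1, ht2]
  have hlhs : (diagonal hH.eigenvalues * V).trace = ∑ i, hH.eigenvalues i * V i i := by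
    simp [Matrix.trace, Matrix.diag, Matrix.diagonal_mul]
  have hrhs : (diagonal hH.eigenvalues).trace = ∑ i, hH.eigenvalues i := by
    simp [Matrix.trace, Matrix.diag]
  rw [hlhs, hrhs]
  exact Finset.sum_le_sum fun i _ =>
    mul_le_of_le_one_right (hS.eigenvalues_pos i).le (hdiag i)

/-- For an orientation-preserving invertible matrix `A` (i.e. `det A > 0`), the Frobenius
distance from `A` to `SO(d)` is achieved at the orthogonal polar factor:
`dist(A, SO(d)) = |A - A (AᵀA)^{-1/2}|`, where `S` is the symmetric positive-definite
square root of `AᵀA`. -/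
theorem dist_SO_eq_polar (d : ℕ) (A S : Matrix (Fin d) (Fin d) ℝ)
    (hA : 0 < A.det) (hS : S.PosDef) (hSsq : S * S = Aᵀ * A) :
    Metric.infDist A (SOd d) = ‖A - A * S⁻¹‖ := by
  have hSsym : Sᵀ = S := by
    have := hS.1
    rwa [Matrix.IsHermitian, conjTranspose_eq_transpose_of_trivial] at this
  have hSdet : 0 < S.det := hS.det_pos
  have hSunit : IsUnit S.det := isUnit_iff_ne_zero.mpr hSdet.ne'
  have hSinv : S * S⁻¹ = 1 := Matrix.mul_nonsing_inv S hSunit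
  have hinvS : S⁻¹ * S = 1 := Matrix.nonsing_inv_mul S hSunit
  have hSinvT : S⁻¹ᵀ = S⁻¹ := by rw [Matrix.transpose_nonsing_inv, hSsym]
  set R : Matrix (Fin d) (Fin d) ℝ := A * S⁻¹ with hR
  have hRT : Rᵀ * R = 1 := by
    have : Rᵀ * R = S⁻¹ * (S * S) * S⁻¹ := by
      rw [hR, Matrix.transpose_mul, hSinvT, hSsq]
      simp [Matrix.mul_assoc]
    rw [this, ← Matrix.mul_assoc, Matrix.mul_assoc (S⁻¹ * S), hSinv, hinvS]
    simp
  have hRRT : R * Rᵀ = 1 := mul_eq_one_comm.mp hRT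
  have hdetS_eq : S.det = A.det := by
    have h1 : S.det * S.det = A.det * A.det := by
      have := congrArg Matrix.det hSsq
      simpa [Matrix.det_mul, Matrix.det_transpose] using this
    nlinarith
  have hdetR : R.det = 1 := by
    rw [hR, Matrix.det_mul, Matrix.det_nonsing_inv, hdetS_eq]
    field_simp
    exact Ring.mul_inverse_cancel _ (isUnit_iff_ne_zero.mpr hA.ne')
  have hRmem : R ∈ SOd d := ⟨hRT, hdetR⟩
  -- trace identities
  have hAR : Aᵀ * R = S := by
    rw [hR, ← Matrix.mul_assoc, ← hSsq, Matrix.mul_assoc, hSinv, mul_one]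
  have hATfact : Aᵀ = S * Rᵀ := by
    rw [hR, Matrix.transpose_mul, hSinvT, ← Matrix.mul_assoc, hSinv, one_mul]
  -- norm-squared expansion for Q with QᵀQ = 1
  have hexp : ∀ Q : Matrix (Fin d) (Fin d) ℝ, Qᵀ * Q = 1 →
      ‖A - Q‖ ^ 2 = (Aᵀ * A).trace + d - 2 * (Aᵀ * Q).trace := by
    intro Q hQ
    rw [aux_norm_sq_eq_trace]
    have hexpand : (A - Q)ᵀ * (A - Q) = Aᵀ * A - Aᵀ * Q - Qᵀ * A + Qᵀ * Q := by
      rw [Matrix.transpose_sub]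
      noncomm_ring
    rw [hexpand, hQ]
    have htr : (Qᵀ * A).trace = (Aᵀ * Q).trace := by
      rw [← Matrix.trace_transpose (Qᵀ * A), Matrix.transpose_mul, Matrix.transpose_transpose]
    simp only [Matrix.trace_add, Matrix.trace_sub, htr, Matrix.trace_one]
    simp [Finset.card_univ]
    ring
  -- key inequality
  have hkey : ∀ Q ∈ SOd d, ‖A - R‖ ≤ ‖A - Q‖ := by
    intro Q hQ
    have hQT := hQ.1
    have hsq : ‖A - R‖ ^ 2 ≤ ‖A - Q‖ ^ 2 := by
      rw [hexp R hRT, hexp Q hQT]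
      have h1 : (Aᵀ * Q).trace ≤ (Aᵀ * R).trace := by
        rw [hAR, hATfact, Matrix.mul_assoc]
        have hU : (Rᵀ * Q)ᵀ * (Rᵀ * Q) = 1 := by
          rw [Matrix.transpose_mul, Matrix.transpose_transpose, Matrix.mul_assoc,
            ← Matrix.mul_assoc R Rᵀ Q, hRRT, one_mul, hQT]
        exact aux_trace_mul_le_trace d S (Rᵀ * Q) hS hU
      linarith
    exact (pow_le_pow_iff_left₀ (norm_nonneg _) (norm_nonneg _) two_ne_zero).mp hsq
  -- conclude
  apply le_antisymm
  · have := Metric.infDist_le_dist_of_mem (x := A) hRmem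
    rwa [dist_eq_norm] at this
  · by_contra h
    push_neg at h
    rw [Metric.infDist_lt_iff ⟨R, hRmem⟩] at h
    obtain ⟨Q, hQmem, hQlt⟩ := h
    rw [dist_eq_norm] at hQlt
    exact absurd (hkey Q hQmem) (not_le.mpr hQlt)
end

section
/- For the unit sphere S^d ⊂ ℝ^{d+1} and any map f with measurable differential, the pointwise distance of the thickened differential from orientation-preserving isometries is controlled by that of df: at each point (p,r) with r ∈ (1/2,2), dist(d(Φ∘f̃), SO(s̃, e)) ≤ 2·dist(df, SO(s, f*s)), where f̃(p,r) = (f(p),r) and Φ(p,r) = rκ(p). -/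
open Set

open scoped RealInnerProductSpace

noncomputable section

variable (d : ℕ)

local notation "E" => EuclideanSpace ℝ (Fin (d + 1))

/-- Norm of a linear map restricted to the tangent space `T_p S^d = p^⊥`. -/
def tanNorm (p : EuclideanSpace ℝ (Fin (d + 1)))
    (L : EuclideanSpace ℝ (Fin (d + 1)) →ₗ[ℝ] EuclideanSpace ℝ (Fin (d + 1))) : ℝ :=
  sSup {x : ℝ | ∃ v : EuclideanSpace ℝ (Fin (d + 1)), ⟪p, v⟫ = 0 ∧ ‖v‖ ≤ 1 ∧ x = ‖L v‖}

/-- Norm of a linear map on the warped-product tangent space `(T_p S^d × ℝ, s̃)`,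
where `|(v, t)|²_{s̃} = r² |v|² + t²`. -/
def warpNorm (p : EuclideanSpace ℝ (Fin (d + 1))) (r : ℝ)
    (L : EuclideanSpace ℝ (Fin (d + 1)) × ℝ →ₗ[ℝ] EuclideanSpace ℝ (Fin (d + 1))) : ℝ :=
  sSup {x : ℝ | ∃ (v : EuclideanSpace ℝ (Fin (d + 1))) (t : ℝ),
    ⟪p, v⟫ = 0 ∧ r ^ 2 * ‖v‖ ^ 2 + t ^ 2 ≤ 1 ∧ x = ‖L (v, t)‖}

lemma tanSet_bddAbove (p : EuclideanSpace ℝ (Fin (d + 1)))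
    (L : EuclideanSpace ℝ (Fin (d + 1)) →ₗ[ℝ] EuclideanSpace ℝ (Fin (d + 1))) :
    BddAbove {x : ℝ | ∃ v : E, ⟪p, v⟫ = 0 ∧ ‖v‖ ≤ 1 ∧ x = ‖L v‖} := by
  refine ⟨‖LinearMap.toContinuousLinearMap L‖, ?_⟩
  rintro x ⟨v, -, hv, rfl⟩
  calc ‖L v‖ ≤ ‖LinearMap.toContinuousLinearMap L‖ * ‖v‖ :=
        (LinearMap.toContinuousLinearMap L).le_opNorm v
    _ ≤ ‖LinearMap.toContinuousLinearMap L‖ * 1 :=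
        mul_le_mul_of_nonneg_left hv (norm_nonneg _)
    _ = _ := mul_one _

lemma tanNorm_nonneg (p : EuclideanSpace ℝ (Fin (d + 1)))
    (L : EuclideanSpace ℝ (Fin (d + 1)) →ₗ[ℝ] EuclideanSpace ℝ (Fin (d + 1))) :
    0 ≤ tanNorm d p L :=
  le_csSup (tanSet_bddAbove d p L) ⟨0, by simp, by simp, by simp⟩

lemma warpNorm_nonneg (p : EuclideanSpace ℝ (Fin (d + 1))) (r : ℝ) (hr : 1 / 2 < r)
    (L : EuclideanSpace ℝ (Fin (d + 1)) × ℝ →ₗ[ℝ] EuclideanSpace ℝ (Fin (d + 1))) :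
    0 ≤ warpNorm d p r L := by
  have hr0 : (0 : ℝ) < r := lt_trans (by norm_num) hr
  refine le_csSup ⟨2 * ‖LinearMap.toContinuousLinearMap L‖, ?_⟩
    ⟨0, 0, by simp, by simp, by rw [Prod.mk_zero_zero, map_zero, norm_zero]⟩
  rintro x ⟨v, t, -, hvt, rfl⟩
  have hv : ‖v‖ ≤ 2 := by nlinarith [norm_nonneg v, sq_nonneg t, sq_nonneg (‖v‖ - 2)]
  have ht : |t| ≤ 2 := by
    have := abs_nonneg t
    nlinarith [sq_abs t, mul_nonneg (sq_nonneg r) (sq_nonneg ‖v‖)]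
  have hnorm : ‖(v, t)‖ ≤ 2 := by
    rw [Prod.norm_def]
    exact max_le hv (by simpa using ht)
  calc ‖L (v, t)‖ ≤ ‖LinearMap.toContinuousLinearMap L‖ * ‖(v, t)‖ :=
        (LinearMap.toContinuousLinearMap L).le_opNorm (v, t)
    _ ≤ ‖LinearMap.toContinuousLinearMap L‖ * 2 :=
        mul_le_mul_of_nonneg_left hnorm (norm_nonneg _)
    _ = 2 * ‖LinearMap.toContinuousLinearMap L‖ := mul_comm _ _

/-- Pointwise distance estimate for the thickened differential (Theorem 4.2): at a point
`(p, r)` with `r ∈ (1/2, 2)`, `q = f(p)`, and `Dm = df_p`, the distance of the thickened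
differential `T(v,t) = t q + r Dm v` from the linear isometries
`(T_p S^d × ℝ, s̃) → (ℝ^{d+1}, e)` is at most twice the distance of `Dm` from the linear
isometries `(T_p S^d, s) → (T_q S^d, s)`:
`dist(d(Φ∘f̃), SO(s̃, e)) ≤ 2 dist(df, SO(s, f*s))`. -/
theorem thickened_dist_le (p q : EuclideanSpace ℝ (Fin (d + 1)))
    (hp : ‖p‖ = 1) (hq : ‖q‖ = 1) (r : ℝ) (hr : r ∈ Ioo (1 / 2 : ℝ) 2)
    (Dm : EuclideanSpace ℝ (Fin (d + 1)) →ₗ[ℝ] EuclideanSpace ℝ (Fin (d + 1)))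
    (hDm : ∀ v, ⟪p, v⟫ = 0 → ⟪q, Dm v⟫ = 0) :
    sInf {ρ : ℝ | ∃ J : EuclideanSpace ℝ (Fin (d + 1)) × ℝ →ₗ[ℝ]
          EuclideanSpace ℝ (Fin (d + 1)),
        (∀ (v w : EuclideanSpace ℝ (Fin (d + 1))) (t u : ℝ), ⟪p, v⟫ = 0 → ⟪p, w⟫ = 0 →
          ⟪J (v, t), J (w, u)⟫ = r ^ 2 * ⟪v, w⟫ + t * u) ∧
        ρ = warpNorm d p r
          ((((LinearMap.snd ℝ (EuclideanSpace ℝ (Fin (d + 1))) ℝ).smulRight q) +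
            r • (Dm ∘ₗ LinearMap.fst ℝ (EuclideanSpace ℝ (Fin (d + 1))) ℝ)) - J)}
      ≤ 2 * sInf {ρ : ℝ | ∃ R : EuclideanSpace ℝ (Fin (d + 1)) →ₗ[ℝ]
          EuclideanSpace ℝ (Fin (d + 1)),
        (∀ v, ⟪p, v⟫ = 0 → ⟪q, R v⟫ = 0) ∧
        (∀ v w, ⟪p, v⟫ = 0 → ⟪p, w⟫ = 0 → ⟪R v, R w⟫ = ⟪v, w⟫) ∧
        ρ = tanNorm d p (Dm - R)} := by
  have hr0 : (0 : ℝ) < r := lt_trans (by norm_num) hr.1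
  set A := {ρ : ℝ | ∃ J : EuclideanSpace ℝ (Fin (d + 1)) × ℝ →ₗ[ℝ]
          EuclideanSpace ℝ (Fin (d + 1)),
        (∀ (v w : EuclideanSpace ℝ (Fin (d + 1))) (t u : ℝ), ⟪p, v⟫ = 0 → ⟪p, w⟫ = 0 →
          ⟪J (v, t), J (w, u)⟫ = r ^ 2 * ⟪v, w⟫ + t * u) ∧
        ρ = warpNorm d p r
          ((((LinearMap.snd ℝ (EuclideanSpace ℝ (Fin (d + 1))) ℝ).smulRight q) +
            r • (Dm ∘ₗ LinearMap.fst ℝ (EuclideanSpace ℝ (Fin (d + 1))) ℝ)) - J)} with hA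
  set B := {ρ : ℝ | ∃ R : EuclideanSpace ℝ (Fin (d + 1)) →ₗ[ℝ]
          EuclideanSpace ℝ (Fin (d + 1)),
        (∀ v, ⟪p, v⟫ = 0 → ⟪q, R v⟫ = 0) ∧
        (∀ v w, ⟪p, v⟫ = 0 → ⟪p, w⟫ = 0 → ⟪R v, R w⟫ = ⟪v, w⟫) ∧
        ρ = tanNorm d p (Dm - R)} with hB
  -- A is bounded below by 0
  have hAlb : ∀ x ∈ A, (0 : ℝ) ≤ x := by
    rintro x ⟨J, -, rfl⟩
    exact warpNorm_nonneg d p r hr.1 _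
  have hAnonneg : 0 ≤ sInf A := Real.sInf_nonneg hAlb
  -- B is nonempty, via a reflection mapping p to q
  have hBne : B.Nonempty := by
    set Rm : EuclideanSpace ℝ (Fin (d + 1)) →ₗ[ℝ] EuclideanSpace ℝ (Fin (d + 1)) :=
      (Submodule.reflection (ℝ ∙ (p - q))ᗮ).toLinearEquiv.toLinearMap with hRm
    have hRmpq : Rm p = q := Submodule.reflection_sub (hp.trans hq.symm)
    have hRiso : ∀ v w, ⟪Rm v, Rm w⟫ = ⟪v, w⟫ := fun v w =>
      (Submodule.reflection (ℝ ∙ (p - q))ᗮ).inner_map_map v w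
    refine ⟨tanNorm d p (Dm - Rm), Rm, fun v hv => ?_, fun v w _ _ => hRiso v w, rfl⟩
    calc ⟪q, Rm v⟫ = ⟪Rm p, Rm v⟫ := by rw [hRmpq]
      _ = ⟪p, v⟫ := hRiso p v
      _ = 0 := hv
  -- key estimate : sInf A ≤ ρ for each ρ ∈ B
  have key : ∀ ρ ∈ B, sInf A ≤ ρ := by
    rintro ρ ⟨R, hR1, hR2, rfl⟩
    set J : EuclideanSpace ℝ (Fin (d + 1)) × ℝ →ₗ[ℝ] EuclideanSpace ℝ (Fin (d + 1)) :=
      ((LinearMap.snd ℝ (EuclideanSpace ℝ (Fin (d + 1))) ℝ).smulRight q) +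
        r • (R ∘ₗ LinearMap.fst ℝ (EuclideanSpace ℝ (Fin (d + 1))) ℝ) with hJ
    have hJapp : ∀ (v : EuclideanSpace ℝ (Fin (d + 1))) (t : ℝ),
        J (v, t) = t • q + r • R v := by
      intro v t
      simp [hJ]
    have hJiso : ∀ (v w : EuclideanSpace ℝ (Fin (d + 1))) (t u : ℝ), ⟪p, v⟫ = 0 →
        ⟪p, w⟫ = 0 → ⟪J (v, t), J (w, u)⟫ = r ^ 2 * ⟪v, w⟫ + t * u := by
      intro v w t u hv hw
      rw [hJapp, hJapp]
      have hqq : ⟪q, q⟫ = 1 := by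
        rw [real_inner_self_eq_norm_sq, hq]; norm_num
      have hqRv : ⟪q, R v⟫ = 0 := hR1 v hv
      have hqRw : ⟪q, R w⟫ = 0 := hR1 w hw
      have hRvq : ⟪R v, q⟫ = 0 := by rw [real_inner_comm]; exact hqRv
      simp only [inner_add_left, inner_add_right, real_inner_smul_left,
        real_inner_smul_right, hqq, hqRw, hRvq, hR2 v w hv hw]
      ring
    have hdiff : ∀ (v : EuclideanSpace ℝ (Fin (d + 1))) (t : ℝ),
        ((((LinearMap.snd ℝ (EuclideanSpace ℝ (Fin (d + 1))) ℝ).smulRight q) +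
            r • (Dm ∘ₗ LinearMap.fst ℝ (EuclideanSpace ℝ (Fin (d + 1))) ℝ)) - J) (v, t)
          = (Dm - R) (r • v) := by
      intro v t
      simp [hJ, smul_sub]
    have step1 : sInf A ≤ warpNorm d p r
        ((((LinearMap.snd ℝ (EuclideanSpace ℝ (Fin (d + 1))) ℝ).smulRight q) +
          r • (Dm ∘ₗ LinearMap.fst ℝ (EuclideanSpace ℝ (Fin (d + 1))) ℝ)) - J) :=
      csInf_le ⟨0, hAlb⟩ ⟨J, hJiso, rfl⟩
    refine step1.trans ?_
    apply Real.sSup_le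
    · rintro x ⟨v, t, hpv, hvt, rfl⟩
      rw [hdiff]
      refine le_csSup (tanSet_bddAbove d p (Dm - R)) ⟨r • v, ?_, ?_, rfl⟩
      · rw [inner_smul_right, hpv, mul_zero]
      · have h1 : ‖r • v‖ ^ 2 ≤ 1 := by
          rw [norm_smul, Real.norm_eq_abs, mul_pow, sq_abs]
          nlinarith [sq_nonneg t]
        nlinarith [norm_nonneg (r • v)]
    · exact tanNorm_nonneg d p (Dm - R)
  have h1 : sInf A ≤ sInf B := le_csInf hBne key
  have h2 : 0 ≤ sInf B := hAnonneg.trans h1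
  linarith

end
end
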